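/- Let D be a dendrite (a metrizable dendron) and let G be a group acting on D by homeomorphisms. If a map p : D → D lies in the closure, in the product (pointwise convergence) topology on D^D, of the set of translation maps {x ↦ g • x : g ∈ G} (i.e., p is an element of the enveloping semigroup of the action), then p is interval preserving and of Baire class 1: the preimage p⁻¹(O) of every open set O ⊆ D is an F_σ subset of D. -/

import Mathlib

/-- A point `w` separates the points `u` and `v` in a topological space `X` if the complement
of `{w}` is the union of two disjoint open sets, one containing `u` and the other `v`. -/
def Separates {X : Type*} [TopologicalSpace X] (w u v : X) : Prop :=
  ∃ U V : Set X, IsOpen U ∧ IsOpen V ∧ u ∈ U ∧ v ∈ V ∧ Disjoint U V ∧ ({w}ᶜ : Set X) = U ∪ V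

/-- `w` is between `u` and `v`: `w` separates `u` and `v`, or `w ∈ {u, v}`. -/
def Between {X : Type*} [TopologicalSpace X] (u w v : X) : Prop :=
  Separates w u v ∨ w = u ∨ w = v

namespace Stmt12
set_option linter.unusedSectionVars false

open Set Filter Topology Metric

section Basic

variable {X : Type*} [TopologicalSpace X]

lemma _root_.Separates.symm {w u v : X} (h : Separates w u v) : Separates w v u := by
  obtain ⟨U, V, hU, hV, hu, hv, hd, hc⟩ := h
  exact ⟨V, U, hV, hU, hv, hu, hd.symm, by rw [hc, Set.union_comm]⟩

lemma _root_.Separates.ne_left {w u v : X} (h : Separates w u v) : u ≠ w := by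
  obtain ⟨U, V, hU, hV, hu, hv, hd, hc⟩ := h
  intro h'
  have : u ∈ ({w}ᶜ : Set X) := by rw [hc]; exact Or.inl hu
  exact this (by simp [h'])

lemma _root_.Separates.ne_right {w u v : X} (h : Separates w u v) : v ≠ w := h.symm.ne_left

lemma _root_.Separates.ne_uv {w u v : X} (h : Separates w u v) : u ≠ v := by
  obtain ⟨U, V, hU, hV, hu, hv, hd, hc⟩ := h
  intro h'
  exact hd.le_bot ⟨h' ▸ hu, hv⟩

/-- A preconnected set containing two points separated by `w` must contain `w`. -/
lemma mem_of_separates {S : Set X} (hS : IsPreconnected S) {u v w : X}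
    (hu : u ∈ S) (hv : v ∈ S) (h : Separates w u v) : w ∈ S := by
  by_contra hw
  obtain ⟨U, V, hU, hV, huU, hvV, hd, hc⟩ := h
  have hsub : S ⊆ U ∪ V := by
    intro x hx
    have hxw : x ∈ ({w}ᶜ : Set X) := by
      simp only [Set.mem_compl_iff, Set.mem_singleton_iff]
      rintro rfl; exact hw hx
    rwa [hc] at hxw
  obtain ⟨x, -, hxU, hxV⟩ := hS U V hU hV hsub ⟨u, hu, huU⟩ ⟨v, hv, hvV⟩
  exact hd.le_bot ⟨hxU, hxV⟩

lemma mem_of_between {S : Set X} (hS : IsPreconnected S) {u v w : X}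
    (hu : u ∈ S) (hv : v ∈ S) (h : Between u w v) : w ∈ S := by
  rcases h with h | rfl | rfl
  · exact mem_of_separates hS hu hv h
  · exact hu
  · exact hv

end Basic

variable {D : Type*} [MetricSpace D] [CompactSpace D] [ConnectedSpace D]

/-- The separation hypothesis of a dendron. -/
def Hsep (D : Type*) [TopologicalSpace D] : Prop := ∀ u v : D, u ≠ v → ∃ w, Separates w u v

/-- There is no infinite pairwise disjoint family of preconnected sets all of diameter `≥ ε`. -/
lemma no_big_disjoint_family (hs : Hsep D) {ε : ℝ} (hε : 0 < ε) (A : ℕ → Set D)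
    (hconn : ∀ n, IsPreconnected (A n)) (hdisj : Pairwise (Function.onFun Disjoint A))
    (hbig : ∀ n, ∃ x ∈ A n, ∃ y ∈ A n, ε ≤ dist x y) : False := by
  choose x hx y hy hxy using hbig
  obtain ⟨⟨a, b⟩, -, φ, hφ, hab⟩ :=
    isCompact_univ.tendsto_subseq (x := fun n => ((x n, y n) : D × D)) (fun n => mem_univ _)
  have hxa : Tendsto (fun n => x (φ n)) atTop (𝓝 a) :=
    (continuous_fst.tendsto _).comp hab
  have hyb : Tendsto (fun n => y (φ n)) atTop (𝓝 b) :=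
    (continuous_snd.tendsto _).comp hab
  have hdab : ε ≤ dist a b := by
    have : Tendsto (fun n => dist (x (φ n)) (y (φ n))) atTop (𝓝 (dist a b)) :=
      (continuous_dist.tendsto (a, b)).comp (hxa.prodMk_nhds hyb)
    exact ge_of_tendsto this (Eventually.of_forall fun n => hxy (φ n))
  have hab' : a ≠ b := by
    intro h; rw [h, dist_self] at hdab; linarith
  obtain ⟨w, U, V, hU, hV, haU, hbV, hd, hc⟩ := hs a b hab'
  have h1 : ∀ᶠ n in atTop, x (φ n) ∈ U := hxa (hU.mem_nhds haU)
  have h2 : ∀ᶠ n in atTop, y (φ n) ∈ V := hyb (hV.mem_nhds hbV)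
  obtain ⟨N, hN⟩ := (h1.and h2).exists_forall_of_atTop
  have hw : ∀ n, N ≤ n → w ∈ A (φ n) := by
    intro n hn
    exact mem_of_separates (hconn (φ n)) (hx (φ n)) (hy (φ n))
      ⟨U, V, hU, hV, (hN n hn).1, (hN n hn).2, hd, hc⟩
  have hne : φ N ≠ φ (N + 1) := fun h => (Nat.succ_ne_self N).symm (hφ.injective h)
  exact (hdisj hne).le_bot ⟨hw N le_rfl, hw (N + 1) (Nat.le_succ N)⟩

/-- Boundary bumping: in a compact connected T2 space, the connected component of a point in a
proper closed subset meets the frontier of that subset. -/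
lemma component_meets_frontier {K : Set D} (hK : IsClosed K) (hKu : K ≠ univ) {x : D}
    (hx : x ∈ K) : (connectedComponentIn K x ∩ frontier K).Nonempty := by
  by_contra hempty
  rw [Set.not_nonempty_iff_eq_empty] at hempty
  haveI : CompactSpace K := isCompact_iff_compactSpace.mp (hK.isCompact)
  set x' : K := ⟨x, hx⟩
  have hcc : connectedComponentIn K x = Subtype.val '' connectedComponent x' :=
    connectedComponentIn_eq_image hx
  -- frontier inside the subtype
  set Fr : Set K := Subtype.val ⁻¹' frontier K
  have hFrc : IsCompact Fr := (IsClosed.preimage continuous_subtype_val isClosed_frontier).isCompact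
  have hccFr : connectedComponent x' ∩ Fr = ∅ := by
    rw [Set.eq_empty_iff_forall_notMem]
    rintro z ⟨hz1, hz2⟩
    have : (z : D) ∈ connectedComponentIn K x ∩ frontier K :=
      ⟨hcc ▸ ⟨z, hz1, rfl⟩, hz2⟩
    rw [hempty] at this; exact this
  -- use that the component is the intersection of clopens
  have hiInter := connectedComponent_eq_iInter_isClopen x'
  -- find a finite subfamily of clopens whose intersection misses Fr
  have hdisj : Fr ∩ ⋂ s : { s : Set K // IsClopen s ∧ x' ∈ s }, (s : Set K) = ∅ := by
    rw [← hiInter, Set.inter_comm]; exact hccFr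
  obtain ⟨t, ht⟩ := hFrc.elim_finite_subfamily_closed
    (fun s : { s : Set K // IsClopen s ∧ x' ∈ s } => (s : Set K))
    (fun s => s.2.1.1) hdisj
  -- Z is a clopen set in K containing x', missing Fr
  set Z : Set K := ⋂ s ∈ t, (s : Set K) with hZ
  have hZclopen : IsClopen Z := by
    apply Set.Finite.isClopen_biInter t.finite_toSet
    intro s _; exact s.2.1
  have hZx : x' ∈ Z := by
    rw [hZ]; exact Set.mem_biInter fun s _ => s.2.2
  have hZFr : ∀ z ∈ Z, (z : D) ∉ frontier K := by
    intro z hz hzf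
    have : z ∈ Fr ∩ ⋂ s ∈ t, (s : Set K) := ⟨hzf, hz⟩
    rw [ht] at this; exact this
  -- push to the ambient space
  set A : Set D := Subtype.val '' Z
  have hAclosed : IsClosed A := by
    have : IsCompact A := (hZclopen.1.isCompact).image continuous_subtype_val
    exact this.isClosed
  have hAsubK : A ⊆ K := by rintro a ⟨z, hz, rfl⟩; exact z.2
  have hAint : A ⊆ interior K := by
    rintro a ⟨z, hz, rfl⟩
    by_contra h
    exact hZFr z hz (hK.frontier_eq ▸ ⟨z.2, h⟩)
  have hAopen : IsOpen A := by
    obtain ⟨V, hV, hZV⟩ := isOpen_induced_iff.mp hZclopen.2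
    have hA' : A = V ∩ interior K := by
      apply Set.Subset.antisymm
      · rintro a ⟨z, hz, rfl⟩
        refine ⟨?_, hAint ⟨z, hz, rfl⟩⟩
        rw [← hZV] at hz; exact hz
      · rintro a ⟨haV, haK⟩
        refine ⟨⟨a, interior_subset haK⟩, ?_, rfl⟩
        rw [← hZV]; exact haV
    rw [hA']; exact hV.inter isOpen_interior
  have : A = univ := IsClopen.eq_univ ⟨hAclosed, hAopen⟩ ⟨x, x', hZx, rfl⟩
  exact hKu (univ_subset_iff.mp (this ▸ hAsubK))

/-- A connected component of a set, intersected back with the set, absorbs its closure. -/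
lemma closure_cc_inter {F : Set D} {y : D} :
    closure (connectedComponentIn F y) ∩ F ⊆ connectedComponentIn F y := by
  by_cases hy : y ∈ F
  · have h1 : IsPreconnected (closure (connectedComponentIn F y) ∩ F) := by
      apply IsPreconnected.subset_closure isPreconnected_connectedComponentIn
      · exact subset_inter subset_closure (connectedComponentIn_subset _ _)
      · exact inter_subset_left
    exact h1.subset_connectedComponentIn
      ⟨subset_closure (mem_connectedComponentIn hy), hy⟩ inter_subset_right
  · rw [connectedComponentIn_eq_empty hy]; simp

lemma isClosed_cc_of_isClosed {F : Set D} (hF : IsClosed F) (y : D) :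
    IsClosed (connectedComponentIn F y) := by
  have : closure (connectedComponentIn F y) ⊆ connectedComponentIn F y := by
    intro z hz
    exact closure_cc_inter ⟨hz, hF.closure_subset ((closure_mono (connectedComponentIn_subset _ _)) hz)⟩
  exact isClosed_of_closure_subset this

lemma cc_disjoint_of_ne {F : Set D} {a b : D}
    (h : connectedComponentIn F a ≠ connectedComponentIn F b) :
    Disjoint (connectedComponentIn F a) (connectedComponentIn F b) := by
  rw [Set.disjoint_left]
  intro t ha hb
  exact h ((connectedComponentIn_eq ha).trans (connectedComponentIn_eq hb).symm)

/-- A metrizable dendron is locally connected. -/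
lemma locallyConnected (hs : Hsep D) : LocallyConnectedSpace D := by
  rw [locallyConnectedSpace_iff_connected_subsets]
  intro x U hU
  obtain ⟨ε, hε, hball⟩ := Metric.nhds_basis_closedBall.mem_iff.mp hU
  by_cases hKu : closedBall x ε = univ
  · exact ⟨univ, univ_mem, isPreconnected_univ, by rw [← hKu]; exact hball⟩
  set K := closedBall x ε with hKdef
  have hK : IsClosed K := isClosed_closedBall
  have hxK : x ∈ K := mem_closedBall_self hε.le
  set V := connectedComponentIn K x with hVdef
  refine ⟨V, ?_, isPreconnected_connectedComponentIn,
    (connectedComponentIn_subset _ _).trans hball⟩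
  by_contra hV
  have hbad : ∀ δ : ℝ, 0 < δ → ∃ y, dist y x < δ ∧ y ∉ V := by
    intro δ hδ
    by_contra h; push_neg at h
    exact hV (Metric.mem_nhds_iff.mpr ⟨δ, hδ, fun z hz => h z (mem_ball.mp hz)⟩)
  set 𝒮 : Set (Set D) := {Γ | ∃ y, dist y x < ε / 2 ∧ y ∉ V ∧ Γ = connectedComponentIn K y}
    with h𝒮
  have hmemK : ∀ y : D, dist y x < ε / 2 → y ∈ K := by
    intro y hy
    rw [hKdef, mem_closedBall]
    linarith
  have hxnot : ∀ Γ ∈ 𝒮, x ∉ Γ := by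
    rintro Γ ⟨y, hy1, hy2, rfl⟩ hxΓ
    apply hy2
    show y ∈ connectedComponentIn K x
    rw [← connectedComponentIn_eq hxΓ]
    exact mem_connectedComponentIn (hmemK y hy1)
  have hinf : 𝒮.Infinite := by
    intro hfin
    have hWclosed : IsClosed (⋃₀ 𝒮) := by
      rw [Set.sUnion_eq_biUnion]
      apply hfin.isClosed_biUnion
      rintro Γ ⟨y, -, -, rfl⟩
      exact isClosed_cc_of_isClosed hK y
    have hxW : x ∈ (⋃₀ 𝒮)ᶜ := by
      intro hx
      obtain ⟨Γ, hΓ, hxΓ⟩ := hx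
      exact hxnot Γ hΓ hxΓ
    obtain ⟨δ, hδ, hsub⟩ := Metric.mem_nhds_iff.mp (hWclosed.isOpen_compl.mem_nhds hxW)
    obtain ⟨y, hy1, hy2⟩ := hbad (min δ (ε / 2)) (lt_min hδ (by linarith))
    have hyS : connectedComponentIn K y ∈ 𝒮 :=
      ⟨y, lt_of_lt_of_le hy1 (min_le_right _ _), hy2, rfl⟩
    have hyW : y ∈ ⋃₀ 𝒮 :=
      ⟨_, hyS, mem_connectedComponentIn (hmemK y (lt_of_lt_of_le hy1 (min_le_right _ _)))⟩
    exact hsub (mem_ball.mpr (lt_of_lt_of_le hy1 (min_le_left _ _))) hyW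
  set emb := hinf.natEmbedding
  have hspec : ∀ n : ℕ, ∃ y, dist y x < ε / 2 ∧ y ∉ V ∧ (emb n : Set D) = connectedComponentIn K y :=
    fun n => (emb n).2
  choose yy hy1 hy2 hy3 using hspec
  apply no_big_disjoint_family hs (by linarith : (0:ℝ) < ε / 2) (fun n => (emb n : Set D))
  · intro n
    rw [hy3 n]; exact isPreconnected_connectedComponentIn
  · intro n m hnm
    have : (emb n : Set D) ≠ (emb m : Set D) := by
      intro h
      exact hnm (emb.injective (Subtype.ext h))
    rw [Function.onFun, hy3 n, hy3 m]
    exact cc_disjoint_of_ne (by rw [← hy3 n, ← hy3 m]; exact this)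
  · intro n
    obtain ⟨z, hz1, hz2⟩ := component_meets_frontier hK hKu (hmemK _ (hy1 n))
    refine ⟨yy n, by rw [hy3 n]; exact mem_connectedComponentIn (hmemK _ (hy1 n)),
      z, by rw [hy3 n]; exact hz1, ?_⟩
    have hzK : z ∉ ball x ε := by
      intro hzb
      have : z ∈ interior K := interior_maximal ball_subset_closedBall isOpen_ball hzb
      rw [hK.frontier_eq] at hz2
      exact hz2.2 this
    rw [mem_ball] at hzK; push_neg at hzK
    have : dist (yy n) z ≥ dist z x - dist (yy n) x := by
      have := dist_triangle z (yy n) x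
      rw [dist_comm z (yy n)] at this
      linarith
    linarith [hy1 n]

section CP

variable [LocallyConnectedSpace D]

/-- The connected component of `x` in the complement of `{w}`. -/
def cp (w x : D) : Set D := connectedComponentIn {w}ᶜ x

lemma cp_open (w x : D) : IsOpen (cp w x) :=
  (isOpen_compl_singleton).connectedComponentIn

lemma cp_subset (w x : D) : cp w x ⊆ ({w}ᶜ : Set D) := connectedComponentIn_subset _ _

lemma not_mem_cp_self (w x : D) : w ∉ cp w x := fun h => cp_subset w x h rfl

lemma mem_cp {w x : D} (h : x ≠ w) : x ∈ cp w x :=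
  mem_connectedComponentIn (by simpa using h)

lemma cp_preconn (w x : D) : IsPreconnected (cp w x) := isPreconnected_connectedComponentIn

lemma cp_eq_of_mem {w x y : D} (h : y ∈ cp w x) : cp w y = cp w x := (connectedComponentIn_eq h).symm

lemma cp_disjoint_of_ne {w x y : D} (h : cp w x ≠ cp w y) : Disjoint (cp w x) (cp w y) :=
  cc_disjoint_of_ne h

lemma subset_cp {S : Set D} {w x : D} (hS : IsPreconnected S) (hx : x ∈ S)
    (hw : S ⊆ ({w}ᶜ : Set D)) : S ⊆ cp w x :=
  hS.subset_connectedComponentIn hx hw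

lemma closure_cp_subset (w x : D) : closure (cp w x) ⊆ cp w x ∪ {w} := by
  intro t ht
  by_cases htw : t = w
  · exact Or.inr htw
  · exact Or.inl (closure_cc_inter ⟨ht, by simpa using htw⟩)

lemma mem_closure_cp {w x : D} (h : x ≠ w) : w ∈ closure (cp w x) := by
  by_contra hw
  have hclosed : IsClosed (cp w x) := by
    apply isClosed_of_closure_subset
    intro t ht
    rcases closure_cp_subset w x ht with h' | h'
    · exact h'
    · exact absurd (h' ▸ ht) hw
  have : cp w x = univ := IsClopen.eq_univ ⟨hclosed, cp_open w x⟩ ⟨x, mem_cp h⟩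
  exact (not_mem_cp_self w x) (this ▸ mem_univ w)

lemma cp_union_preconn {w x : D} (h : x ≠ w) : IsPreconnected (cp w x ∪ {w}) := by
  apply IsPreconnected.subset_closure (cp_preconn w x) subset_union_left
  intro t ht
  rcases ht with ht | ht
  · exact subset_closure ht
  · rw [ht]; exact mem_closure_cp h

lemma coside_preconn (w x : D) : IsPreconnected ((cp w x)ᶜ) := by
  by_cases hx : x = w
  · rw [hx, cp, connectedComponentIn_eq_empty (by simp)]
    simpa using isPreconnected_univ
  · apply isPreconnected_of_forall w
    intro y hy
    by_cases hyw : y = w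
    · exact ⟨{w}, by simpa using not_mem_cp_self w x, rfl, by simp [hyw],
        isPreconnected_singleton⟩
    · refine ⟨cp w y ∪ {w}, ?_, Or.inr rfl, Or.inl (mem_cp hyw), cp_union_preconn hyw⟩
      intro t ht
      rcases ht with ht | ht
      · intro htc
        have hne : cp w y ≠ cp w x := by
          intro h'
          exact hy (h' ▸ mem_cp hyw)
        exact (cp_disjoint_of_ne hne).le_bot ⟨ht, htc⟩ 
      · rw [mem_singleton_iff] at ht
        rw [ht]; exact not_mem_cp_self w x

lemma separates_iff_cp {w u v : D} :
    Separates w u v ↔ u ≠ w ∧ v ≠ w ∧ cp w u ≠ cp w v := by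
  constructor
  · intro h
    refine ⟨h.ne_left, h.ne_right, ?_⟩
    intro heq
    have hv : v ∈ cp w u := heq ▸ mem_cp h.ne_right
    exact not_mem_cp_self w u
      (mem_of_separates (cp_preconn w u) (mem_cp h.ne_left) hv h)
  · rintro ⟨hu, hv, hne⟩
    refine ⟨cp w u, {w}ᶜ \ cp w u, cp_open w u, ?_, mem_cp hu, ?_, ?_, ?_⟩
    · have : ({w}ᶜ \ cp w u : Set D) = {w}ᶜ ∩ (closure (cp w u))ᶜ := by
        apply Set.Subset.antisymm
        · rintro t ⟨ht1, ht2⟩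
          refine ⟨ht1, fun hcl => ?_⟩
          rcases closure_cp_subset w u hcl with h' | h'
          · exact ht2 h'
          · exact ht1 h'
        · rintro t ⟨ht1, ht2⟩
          exact ⟨ht1, fun h => ht2 (subset_closure h)⟩
      rw [this]
      exact isOpen_compl_singleton.inter isClosed_closure.isOpen_compl
    · refine ⟨by simpa using hv, fun h => ?_⟩
      exact hne (cp_eq_of_mem h).symm
    · exact Set.disjoint_left.mpr fun t ht ht' => ht'.2 ht
    · rw [Set.union_diff_self, Set.union_eq_self_of_subset_left (cp_subset w u)]
  
lemma mirror {w₁ w₂ u v : D} (h1 : Separates w₁ u v) (h2 : Separates w₂ u v)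
    (h12 : w₂ ∈ cp w₁ u) : w₁ ∈ cp w₂ v := by
  have hv1 : v ∉ cp w₁ u := by
    intro hv
    exact (separates_iff_cp.mp h1).2.2 (cp_eq_of_mem hv).symm
  apply subset_cp (coside_preconn w₁ u) (show v ∈ (cp w₁ u)ᶜ from hv1)
  · intro t ht
    simp only [mem_compl_iff, mem_singleton_iff]
    rintro rfl
    exact ht h12
  · exact not_mem_cp_self w₁ u

lemma nest {x x' y z : D} (h : x' ∈ cp x y) (hne : cp x' z ≠ cp x' x) :
    cp x' z ⊆ cp x y := by
  have hcos : ((cp x y)ᶜ : Set D) ⊆ cp x' x := by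
    apply subset_cp (coside_preconn x y) (show x ∈ (cp x y)ᶜ from not_mem_cp_self x y)
    intro t ht
    simp only [mem_compl_iff, mem_singleton_iff]
    rintro rfl
    exact ht h
  intro t ht
  by_contra htc
  exact (cp_disjoint_of_ne hne).le_bot ⟨ht, hcos htc⟩

end CP

section Closed

variable [LocallyConnectedSpace D]

/-- Core of the closedness of the betweenness relation: a limit of separators of `u, v`
which stays on the `u`-side eventually forces the limit point to separate `u` from `v`. -/
lemma caseCore (hs : Hsep D) {u v w : D} (hwu : w ≠ u) (hwv : w ≠ v) (ω : ℕ → D)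
    (hω : Tendsto ω atTop (𝓝 w))
    (hev : ∀ᶠ n in atTop, Separates (ω n) u v ∧ ω n ≠ w)
    (hfreq : ∃ᶠ n in atTop, w ∈ cp (ω n) u)
    (hnot : ¬ Separates w u v) : False := by
  set E : ℕ → Prop := fun n => Separates (ω n) u v ∧ ω n ≠ w ∧ w ∈ cp (ω n) u with hE
  have hEfreq : ∃ᶠ n in atTop, E n := by
    apply (hfreq.and_eventually hev).mono
    rintro n ⟨h1, h2, h3⟩
    exact ⟨h2, h3, h1⟩
  have hu_ne : ∀ n, E n → u ≠ ω n := fun n hn => hn.1.ne_left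
  have hv_ne : ∀ n, E n → v ≠ ω n := fun n hn => hn.1.ne_right
  have hAB : ∀ n, E n → cp (ω n) u ≠ cp (ω n) v := fun n hn => (separates_iff_cp.mp hn.1).2.2
  have htrip : ∀ n, E n → ∀ m, Separates (ω m) u v →
      ω m ∈ cp (ω n) u ∪ (cp (ω n) v ∪ {ω n}) := by
    intro n hn m hm
    have hP : IsPreconnected ((cp (ω n) u ∪ {ω n}) ∪ (cp (ω n) v ∪ {ω n})) :=
      IsPreconnected.union (ω n) (Or.inr rfl) (Or.inr rfl)
        (cp_union_preconn (hu_ne n hn)) (cp_union_preconn (hv_ne n hn))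
    have hm' := mem_of_separates hP (Or.inl (Or.inl (mem_cp (hu_ne n hn))))
      (Or.inr (Or.inl (mem_cp (hv_ne n hn)))) hm
    rcases hm' with (h | h) | (h | h)
    · exact Or.inl h
    · exact Or.inr (Or.inr h)
    · exact Or.inr (Or.inl h)
    · exact Or.inr (Or.inr h)
  have hEVN : ∀ n, E n → ∀ᶠ m in atTop, ω m ∈ cp (ω n) u := by
    intro n hn
    by_cases hf : ∃ᶠ m in atTop, ω m ∈ cp (ω n) v ∪ {ω n}
    · exfalso
      have hwcl : w ∈ closure (cp (ω n) v ∪ {ω n}) :=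
        mem_closure_of_frequently_of_tendsto hf hω
      have hwm : w ∈ cp (ω n) v ∪ {ω n} := by
        have h1 : closure (cp (ω n) v ∪ {ω n}) ⊆ cp (ω n) v ∪ {ω n} := by
          rw [closure_union, closure_singleton]
          intro t ht
          rcases ht with ht | ht
          · exact closure_cp_subset _ _ ht
          · exact Or.inr ht
        exact h1 hwcl
      rcases hwm with h | h
      · exact (cp_disjoint_of_ne (hAB n hn)).le_bot ⟨hn.2.2, h⟩
      · exact hn.2.1 (mem_singleton_iff.mp h).symm
    · rw [Filter.not_frequently] at hf
      filter_upwards [hf, hev] with m h1 h2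
      rcases htrip n hn m h2.1 with h | h
      · exact h
      · exact absurd h h1
  have hstep : ∀ n, E n → ∃ m, E m ∧ n < m ∧ ω m ∈ cp (ω n) u := by
    intro n hn
    obtain ⟨m, hm⟩ := (((hEVN n hn).and (eventually_gt_atTop n)).and_frequently hEfreq).exists
    exact ⟨m, hm.2, hm.1.2, hm.1.1⟩
  obtain ⟨n₀, hn₀⟩ := hEfreq.exists
  choose f hf1 hf2 hf3 using hstep
  obtain ⟨g, hg_succ⟩ : ∃ g : ℕ → {n : ℕ // E n}, ∀ j, g (j+1) = ⟨f (g j).1 (g j).2, hf1 _ _⟩ :=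
    ⟨fun j => Nat.rec ⟨n₀, hn₀⟩ (fun _ prev => ⟨f prev.1 prev.2, hf1 prev.1 prev.2⟩) j,
      fun j => rfl⟩
  set idx : ℕ → ℕ := fun j => (g j).1 with hidx
  have hgE : ∀ j, E (idx j) := fun j => (g j).2
  have hlt : ∀ j, idx j < idx (j+1) := by
    intro j
    have h' : idx (j+1) = f (g j).1 (g j).2 := by
      show ((g (j+1) : ℕ)) = _
      rw [hg_succ j]
    rw [h']
    exact hf2 (g j).1 (g j).2
  have hmono : StrictMono idx := strictMono_nat_of_lt_succ hlt
  have hlink : ∀ j, ω (idx (j+1)) ∈ cp (ω (idx j)) u := by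
    intro j
    have h' : idx (j+1) = f (g j).1 (g j).2 := by
      show ((g (j+1) : ℕ)) = _
      rw [hg_succ j]
    rw [h']
    exact hf3 (g j).1 (g j).2
  set A : ℕ → Set D := fun j => cp (ω (idx j)) u with hA
  set B : ℕ → Set D := fun j => cp (ω (idx j)) v with hB
  have hstepNest : ∀ i j, ω (idx j) ∈ A i →
      ω (idx i) ∈ B j ∧ A j ⊆ A i ∧ B i ⊆ B j := by
    intro i j hmem
    have hmir : ω (idx i) ∈ cp (ω (idx j)) v := mirror (hgE i).1 (hgE j).1 hmem
    refine ⟨hmir, ?_, ?_⟩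
    · apply nest hmem
      have h1 : cp (ω (idx j)) (ω (idx i)) = B j := cp_eq_of_mem hmir
      rw [h1]
      exact hAB _ (hgE j)
    · apply nest hmir
      have h1 : cp (ω (idx i)) (ω (idx j)) = A i := cp_eq_of_mem hmem
      rw [h1]
      exact (hAB _ (hgE i)).symm
  have hPA : ∀ i j, i < j → ω (idx j) ∈ A i := by
    intro i j hij
    induction j with
    | zero => omega
    | succ k ih =>
      rcases Nat.lt_succ_iff_lt_or_eq.mp hij with h | h
      · exact (hstepNest i k (ih h)).2.1 (hlink k)
      · rw [h]; exact hlink k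
  have hPB : ∀ i j, i < j → ω (idx i) ∈ B j ∧ B i ⊆ B j := by
    intro i j hij
    have := hstepNest i j (hPA i j hij)
    exact ⟨this.1, this.2.2⟩
  have hPBle : ∀ i j, i ≤ j → B i ⊆ B j := by
    intro i j hij
    rcases eq_or_lt_of_le hij with rfl | h
    · exact subset_rfl
    · exact (hPB i j h).2
  set Bu : Set D := ⋃ j, B j with hBu
  have hvBu : v ∈ Bu := mem_iUnion.mpr ⟨0, mem_cp (hv_ne _ (hgE 0))⟩
  have hwA : ∀ j, w ∈ A j := fun j => (hgE j).2.2
  have hwBu : w ∉ Bu := by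
    intro h
    obtain ⟨j, hj⟩ := mem_iUnion.mp h
    exact (cp_disjoint_of_ne (hAB _ (hgE j))).le_bot ⟨hwA j, hj⟩
  have huBu : u ∉ Bu := by
    intro h
    obtain ⟨j, hj⟩ := mem_iUnion.mp h
    exact (cp_disjoint_of_ne (hAB _ (hgE j))).le_bot ⟨mem_cp (hu_ne _ (hgE j)), hj⟩
  have hωBu : ∀ j, ω (idx j) ∈ Bu := fun j => mem_iUnion.mpr ⟨j+1, (hPB j (j+1) (by omega)).1⟩
  have hωidx : Tendsto (fun j => ω (idx j)) atTop (𝓝 w) := hω.comp hmono.tendsto_atTop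
  have hwcl : w ∈ closure Bu := mem_closure_of_tendsto hωidx (Eventually.of_forall hωBu)
  have hclBu : closure Bu ⊆ Bu ∪ {w} := by
    intro t ht
    by_contra htc
    rw [Set.mem_union, not_or] at htc
    obtain ⟨htBu, htw⟩ := htc
    rw [mem_singleton_iff] at htw
    have htne : ∀ j, t ≠ ω (idx j) := by
      intro j h
      exact htBu (h ▸ hωBu j)
    by_cases hθ : ∃ j, cp (ω (idx j)) t ≠ A j
    · obtain ⟨j, hθj⟩ := hθ
      have hθB : cp (ω (idx j)) t ≠ B j := by
        intro h
        exact htBu (mem_iUnion.mpr ⟨j, h ▸ mem_cp (htne j)⟩)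
      obtain ⟨b, hbΘ, hbBu⟩ : ∃ b, b ∈ cp (ω (idx j)) t ∧ b ∈ Bu := by
        obtain ⟨b, hb⟩ := mem_closure_iff_nhds.mp ht _
          ((cp_open (ω (idx j)) t).mem_nhds (mem_cp (htne j)))
        exact ⟨b, hb.1, hb.2⟩
      obtain ⟨k, hk⟩ := mem_iUnion.mp hbBu
      rcases le_or_gt k j with hkj | hjk
      · have hbj : b ∈ B j := hPBle k j hkj hk
        exact hθB ((cp_eq_of_mem hbΘ).symm.trans (cp_eq_of_mem hbj))
      · have hmem : ω (idx j) ∈ B k := (hPB j k hjk).1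
        have hsub : cp (ω (idx j)) t ⊆ B k := by
          apply nest hmem
          have h1 : cp (ω (idx j)) (ω (idx k)) = A j := cp_eq_of_mem (hPA j k hjk)
          rw [h1]
          exact hθj
        exact htBu (mem_iUnion.mpr ⟨k, hsub (mem_cp (htne j))⟩)
    · push_neg at hθ
      have htA : ∀ j, t ∈ A j := fun j => (hθ j) ▸ mem_cp (htne j)
      obtain ⟨s, hsep_s⟩ := hs t w htw
      have hsA : ∀ j, s ∈ A j :=
        fun j => mem_of_separates (cp_preconn _ _) (htA j) (hwA j) hsep_s
      have hts : t ≠ s := hsep_s.ne_left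
      have hws : w ≠ s := hsep_s.ne_right
      obtain ⟨b, hbT, hbBu⟩ : ∃ b, b ∈ cp s t ∧ b ∈ Bu := by
        obtain ⟨b, hb⟩ := mem_closure_iff_nhds.mp ht _
          ((cp_open s t).mem_nhds (mem_cp hts))
        exact ⟨b, hb.1, hb.2⟩
      obtain ⟨k, hk⟩ := mem_iUnion.mp hbBu
      have hev_l : ∀ᶠ l in atTop, ω (idx l) ∈ cp s w :=
        hωidx ((cp_open s w).mem_nhds (mem_cp hws))
      obtain ⟨l, hl1, hl2⟩ := (hev_l.and (eventually_gt_atTop k)).exists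
      have hωls : ω (idx l) ≠ s := fun h => (not_mem_cp_self s w) (h ▸ hl1)
      have hbs : b ≠ s := fun h => (not_mem_cp_self s t) (h ▸ hbT)
      have hsep_b : Separates s b (ω (idx l)) := by
        rw [separates_iff_cp]
        refine ⟨hbs, hωls, ?_⟩
        rw [cp_eq_of_mem hbT, cp_eq_of_mem hl1]
        exact (separates_iff_cp.mp hsep_s).2.2
      have hbl : b ∈ B l := hPBle k l hl2.le hk
      have hS' : IsPreconnected (B l ∪ {ω (idx l)}) := cp_union_preconn (hv_ne _ (hgE l))
      have hsS' : s ∈ B l ∪ {ω (idx l)} :=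
        mem_of_separates hS' (Or.inl hbl) (Or.inr rfl) hsep_b
      rcases hsS' with h | h
      · exact (cp_disjoint_of_ne (hAB _ (hgE l))).le_bot ⟨hsA l, h⟩
      · exact hωls (mem_singleton_iff.mp h).symm
  apply hnot
  refine ⟨(closure Bu)ᶜ, Bu, isClosed_closure.isOpen_compl,
    isOpen_iUnion (fun j => cp_open _ _), ?_, hvBu, ?_, ?_⟩
  · intro h
    rcases hclBu h with h' | h'
    · exact huBu h'
    · exact hwu (mem_singleton_iff.mp h').symm
  · exact Set.disjoint_left.mpr fun t ht ht' => ht (subset_closure ht')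
  · apply Set.Subset.antisymm
    · intro t ht
      by_cases htc : t ∈ closure Bu
      · rcases hclBu htc with h' | h'
        · exact Or.inr h'
        · exact absurd h' ht
      · exact Or.inl htc
    · intro t ht
      rcases ht with ht | ht
      · intro h
        rw [mem_singleton_iff] at h
        exact ht (h ▸ hwcl)
      · intro h
        rw [mem_singleton_iff] at h
        exact hwBu (h ▸ ht)

end Closed

section Closed2

variable [LocallyConnectedSpace D]

/-- The betweenness relation is closed in `D × D × D`. -/
lemma between_isClosed (hs : Hsep D) :
    IsClosed {t : D × D × D | Between t.1 t.2.1 t.2.2} := by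
  rw [← isSeqClosed_iff_isClosed]
  intro q t hq hlim
  obtain ⟨u, w, v⟩ := t
  simp only [mem_setOf_eq] at hq ⊢
  have hu : Tendsto (fun n => (q n).1) atTop (𝓝 u) := (continuous_fst.tendsto _).comp hlim
  have hw : Tendsto (fun n => (q n).2.1) atTop (𝓝 w) :=
    ((continuous_fst.comp continuous_snd).tendsto _).comp hlim
  have hv : Tendsto (fun n => (q n).2.2) atTop (𝓝 v) :=
    ((continuous_snd.comp continuous_snd).tendsto _).comp hlim
  by_contra hB
  rw [Between, not_or, not_or] at hB
  obtain ⟨hnot, hwu, hwv⟩ := hB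
  have hequ : ∀ᶠ n in atTop, ¬ ((q n).2.1 = (q n).1) := by
    rw [← Filter.not_frequently]
    intro hf
    obtain ⟨φ, hφ, hφP⟩ := Filter.extraction_of_frequently_atTop hf
    have h1 : Tendsto (fun k => (q (φ k)).2.1) atTop (𝓝 w) := hw.comp hφ.tendsto_atTop
    have h2 : Tendsto (fun k => (q (φ k)).2.1) atTop (𝓝 u) := by
      apply (hu.comp hφ.tendsto_atTop).congr
      intro k
      exact (hφP k).symm
    exact hwu (tendsto_nhds_unique h1 h2)
  have heqv : ∀ᶠ n in atTop, ¬ ((q n).2.1 = (q n).2.2) := by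
    rw [← Filter.not_frequently]
    intro hf
    obtain ⟨φ, hφ, hφP⟩ := Filter.extraction_of_frequently_atTop hf
    have h1 : Tendsto (fun k => (q (φ k)).2.1) atTop (𝓝 w) := hw.comp hφ.tendsto_atTop
    have h2 : Tendsto (fun k => (q (φ k)).2.1) atTop (𝓝 v) := by
      apply (hv.comp hφ.tendsto_atTop).congr
      intro k
      exact (hφP k).symm
    exact hwv (tendsto_nhds_unique h1 h2)
  have hsepev : ∀ᶠ n in atTop, Separates ((q n).2.1) ((q n).1) ((q n).2.2) := by
    filter_upwards [hequ, heqv] with n h1 h2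
    rcases hq n with h | h | h
    · exact h
    · exact absurd h h1
    · exact absurd h h2
  have hdu : 0 < dist u w := dist_pos.mpr (Ne.symm hwu)
  have hdv : 0 < dist v w := dist_pos.mpr (Ne.symm hwv)
  set ru := dist u w / 2 with hrudef
  set rv := dist v w / 2 with hrvdef
  have hrupos : 0 < ru := by simp only [hrudef]; linarith
  have hrvpos : 0 < rv := by simp only [hrvdef]; linarith
  set Nu := connectedComponentIn (ball u ru) u with hNudef
  set Nv := connectedComponentIn (ball v rv) v with hNvdef
  have hNuo : IsOpen Nu := isOpen_ball.connectedComponentIn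
  have hNvo : IsOpen Nv := isOpen_ball.connectedComponentIn
  have hNu : u ∈ Nu := mem_connectedComponentIn (mem_ball_self hrupos)
  have hNv : v ∈ Nv := mem_connectedComponentIn (mem_ball_self hrvpos)
  have hNupre : IsPreconnected Nu := isPreconnected_connectedComponentIn
  have hNvpre : IsPreconnected Nv := isPreconnected_connectedComponentIn
  have hNusub : Nu ⊆ ball u ru := connectedComponentIn_subset _ _
  have hNvsub : Nv ⊆ ball v rv := connectedComponentIn_subset _ _
  have hwNu : w ∉ closedBall u ru := by
    rw [mem_closedBall, dist_comm]
    push_neg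
    simp only [hrudef]; linarith
  have hwNv : w ∉ closedBall v rv := by
    rw [mem_closedBall, dist_comm]
    push_neg
    simp only [hrvdef]; linarith
  have h1 : ∀ᶠ n in atTop, (q n).1 ∈ Nu := hu (hNuo.mem_nhds hNu)
  have h2 : ∀ᶠ n in atTop, (q n).2.2 ∈ Nv := hv (hNvo.mem_nhds hNv)
  have h3 : ∀ᶠ n in atTop, (q n).2.1 ∈ (closedBall u ru)ᶜ :=
    hw (isClosed_closedBall.isOpen_compl.mem_nhds hwNu)
  have h4 : ∀ᶠ n in atTop, (q n).2.1 ∈ (closedBall v rv)ᶜ :=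
    hw (isClosed_closedBall.isOpen_compl.mem_nhds hwNv)
  set ω : ℕ → D := fun n => (q n).2.1 with hωdef
  have hsepuv : ∀ᶠ n in atTop, Separates (ω n) u v := by
    filter_upwards [hsepev, h1, h2, h3, h4] with n hsep hn1 hn2 hn3 hn4
    have hNusub' : Nu ⊆ ({ω n}ᶜ : Set D) := by
      intro x hx
      simp only [mem_compl_iff, mem_singleton_iff]
      rintro rfl
      exact hn3 (ball_subset_closedBall (hNusub hx))
    have hNvsub' : Nv ⊆ ({ω n}ᶜ : Set D) := by
      intro x hx
      simp only [mem_compl_iff, mem_singleton_iff]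
      rintro rfl
      exact hn4 (ball_subset_closedBall (hNvsub hx))
    have hu_cp : u ∈ cp (ω n) ((q n).1) := subset_cp hNupre hn1 hNusub' hNu
    have hv_cp : v ∈ cp (ω n) ((q n).2.2) := subset_cp hNvpre hn2 hNvsub' hNv
    rw [separates_iff_cp]
    refine ⟨?_, ?_, ?_⟩
    · intro h
      exact hn3 (by rw [show (q n).2.1 = u from h.symm]; exact mem_closedBall_self hrupos.le)
    · intro h
      exact hn4 (by rw [show (q n).2.1 = v from h.symm]; exact mem_closedBall_self hrvpos.le)
    · rw [cp_eq_of_mem hu_cp, cp_eq_of_mem hv_cp]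
      exact (separates_iff_cp.mp hsep).2.2
  have hωw : ∀ᶠ n in atTop, ω n ≠ w := by
    rw [← Filter.not_frequently]
    intro hf
    obtain ⟨n, h1', h2'⟩ := (hf.and_eventually hsepuv).exists
    exact hnot (h1' ▸ h2')
  have htri : ∀ᶠ n in atTop, Separates (ω n) u v ∧ ω n ≠ w := hsepuv.and hωw
  by_cases hcase : ∃ᶠ n in atTop, w ∈ cp (ω n) u
  · exact caseCore hs hwu hwv ω hw htri hcase hnot
  by_cases hcase2 : ∃ᶠ n in atTop, w ∈ cp (ω n) v
  · exact caseCore hs hwv hwu ω hw (htri.mono fun n hn => ⟨hn.1.symm, hn.2⟩) hcase2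
      (fun h => hnot h.symm)
  rw [Filter.not_frequently] at hcase hcase2
  obtain ⟨n, ⟨hsepn, hωn⟩, hnu, hnv⟩ := (htri.and (hcase.and hcase2)).exists
  have hwn : w ≠ ω n := fun h => hωn h.symm
  have hevC : ∀ᶠ m in atTop, ω m ∈ cp (ω n) w := hw ((cp_open _ _).mem_nhds (mem_cp hwn))
  obtain ⟨m, ⟨hmC, hmsep, hmω⟩, hmn⟩ := ((hevC.and htri).and (eventually_gt_atTop n)).exists
  have hP : IsPreconnected ((cp (ω n) u ∪ {ω n}) ∪ (cp (ω n) v ∪ {ω n})) :=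
    IsPreconnected.union (ω n) (Or.inr rfl) (Or.inr rfl)
      (cp_union_preconn hsepn.ne_left) (cp_union_preconn hsepn.ne_right)
  have hm' := mem_of_separates hP (Or.inl (Or.inl (mem_cp hsepn.ne_left)))
    (Or.inr (Or.inl (mem_cp hsepn.ne_right))) hmsep
  rcases hm' with (h | h) | (h | h)
  · exact hnu (by rw [← cp_eq_of_mem h, cp_eq_of_mem hmC]; exact mem_cp hwn)
  · exact (not_mem_cp_self (ω n) w) ((mem_singleton_iff.mp h) ▸ hmC)
  · exact hnv (by rw [← cp_eq_of_mem h, cp_eq_of_mem hmC]; exact mem_cp hwn)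
  · exact (not_mem_cp_self (ω n) w) ((mem_singleton_iff.mp h) ▸ hmC)

end Closed2

section Part2

variable [LocallyConnectedSpace D]

lemma exists_unif {Z : Set D} (hZ : Z.Finite) {x : D} (h : ∀ z ∈ Z, 0 < dist x z) :
    ∃ n : ℕ, ∀ z ∈ Z, 1/(n+1:ℝ) ≤ dist x z := by
  have hpos : ∃ ε : ℝ, 0 < ε ∧ ∀ z ∈ Z, ε ≤ dist x z := by
    rcases Z.eq_empty_or_nonempty with rfl | hne
    · exact ⟨1, one_pos, by simp⟩
    · obtain ⟨z₀, hz₀, hmin⟩ := hZ.isCompact.exists_isMinOn hne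
        ((continuous_const.dist continuous_id).continuousOn)
      exact ⟨dist x z₀, h z₀ hz₀, fun z hz => hmin hz⟩
  obtain ⟨ε, hε, hεle⟩ := hpos
  obtain ⟨n, hn⟩ := exists_nat_one_div_lt hε
  exact ⟨n, fun z hz => le_trans hn.le (hεle z hz)⟩

lemma exists_network [SecondCountableTopology D] :
    ∃ 𝒦 : Set (Set D), 𝒦.Countable ∧ (∀ K ∈ 𝒦, IsClosed K ∧ IsPreconnected K) ∧
      ∀ O : Set D, IsOpen O → ∀ x ∈ O, ∃ K ∈ 𝒦, x ∈ K ∧ K ⊆ O := by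
  obtain ⟨b, hbc, -, hbb⟩ := TopologicalSpace.exists_countable_basis D
  obtain ⟨Q, hQc, hQd⟩ := TopologicalSpace.exists_countable_dense D
  refine ⟨(fun q : Set D × D => closure (connectedComponentIn q.1 q.2)) '' (b ×ˢ Q),
    (hbc.prod hQc).image _, ?_, ?_⟩
  · rintro K ⟨⟨s, q⟩, -, rfl⟩
    exact ⟨isClosed_closure, isPreconnected_connectedComponentIn.closure⟩
  · intro O hO x hx
    obtain ⟨C, hCmem, hCclosed, hCsub⟩ := exists_mem_nhds_isClosed_subset (hO.mem_nhds hx)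
    obtain ⟨s, hsb, hxs, hsC⟩ := hbb.exists_subset_of_mem_open
      (mem_interior_iff_mem_nhds.mpr hCmem) isOpen_interior
    have hso : IsOpen s := hbb.isOpen hsb
    set Γ := connectedComponentIn s x with hΓdef
    have hΓo : IsOpen Γ := hso.connectedComponentIn
    have hxΓ : x ∈ Γ := mem_connectedComponentIn hxs
    obtain ⟨qq, hqQ, hqΓ⟩ := hQd.exists_mem_open hΓo ⟨x, hxΓ⟩
    have hΓq : connectedComponentIn s qq = Γ := (connectedComponentIn_eq hqΓ).symm
    refine ⟨closure (connectedComponentIn s qq), ⟨(s, qq), ⟨hsb, hqQ⟩, rfl⟩, ?_, ?_⟩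
    · rw [hΓq]; exact subset_closure hxΓ
    · rw [hΓq]
      calc closure Γ ⊆ closure s := closure_mono (connectedComponentIn_subset _ _)
        _ ⊆ closure C := closure_mono (hsC.trans interior_subset)
        _ = C := hCclosed.closure_eq
        _ ⊆ O := hCsub

lemma lemmaZ (hs : Hsep D) {p : D → D}
    (hB : ∀ u w v : D, Between u w v → Between (p u) (p w) (p v))
    {K O : Set D} (hK : IsClosed K) (hKc : IsPreconnected K) (hKO : K ⊆ O) (hO : IsOpen O) :
    (closure (p ⁻¹' K) \ p ⁻¹' O).Finite := by
  by_cases hKe : K = ∅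
  · subst hKe
    simp
  by_cases hOu : O = univ
  · subst hOu
    simp
  by_contra hinf
  set Z := closure (p ⁻¹' K) \ p ⁻¹' O with hZdef
  have hKne : K.Nonempty := nonempty_iff_ne_empty.mpr hKe
  have hOc : (Oᶜ : Set D).Nonempty := by
    rw [nonempty_compl]
    exact hOu
  have hcomp : IsCompact ((Oᶜ : Set D) ×ˢ K) :=
    (hO.isClosed_compl.isCompact).prod (hK.isCompact)
  obtain ⟨⟨a₀, c₀⟩, hmem₀, hmin₀⟩ := hcomp.exists_isMinOn (hOc.prod hKne)
    continuous_dist.continuousOn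
  set ε₀ := dist a₀ c₀ with hε₀def
  have hε₀ : 0 < ε₀ := by
    rw [hε₀def, dist_pos]
    intro h
    exact hmem₀.1 (hKO (h ▸ hmem₀.2))
  have hlow : ∀ a ∈ (Oᶜ : Set D), ∀ c ∈ K, ε₀ ≤ dist a c := by
    intro a ha c hc
    exact hmin₀ (Set.mk_mem_prod ha hc)
  have hzO : ∀ z ∈ Z, p z ∉ O := fun z hz => hz.2
  have hzK : ∀ z ∈ Z, p z ∈ (Kᶜ : Set D) := fun z hz h => hzO z hz (hKO h)
  have hdiff : ∀ z ∈ Z, ∀ z' ∈ Z, z ≠ z' →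
      Disjoint (connectedComponentIn Kᶜ (p z)) (connectedComponentIn Kᶜ (p z')) := by
    intro z hz z' hz' hne
    apply cc_disjoint_of_ne
    intro heq
    have hz'mem : p z' ∈ connectedComponentIn Kᶜ (p z) :=
      heq ▸ mem_connectedComponentIn (hzK z' hz')
    obtain ⟨w, hw⟩ := hs z z' hne
    have hwK : p w ∈ K := by
      obtain ⟨U, V, hU, hV, hzU, hz'V, hd, hc⟩ := hw
      obtain ⟨a, ha, hatend⟩ := mem_closure_iff_seq_limit.mp hz.1
      obtain ⟨a', ha', hatend'⟩ := mem_closure_iff_seq_limit.mp hz'.1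
      have he1 : ∀ᶠ k in atTop, a k ∈ U := hatend (hU.mem_nhds hzU)
      have he2 : ∀ᶠ k in atTop, a' k ∈ V := hatend' (hV.mem_nhds hz'V)
      obtain ⟨k, hk1, hk2⟩ := (he1.and he2).exists
      have hbk : Between (a k) w (a' k) := Or.inl ⟨U, V, hU, hV, hk1, hk2, hd, hc⟩
      exact mem_of_between hKc (ha k) (ha' k) (hB _ _ _ hbk)
    have hbz := hB _ _ _ (Or.inl hw : Between z w z')
    rcases hbz with h | h | h
    · have hcomp_mem := mem_of_separates isPreconnected_connectedComponentIn
        (mem_connectedComponentIn (hzK z hz)) hz'mem h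
      exact (connectedComponentIn_subset _ _ hcomp_mem) hwK
    · exact hzO z hz (hKO (h ▸ hwK))
    · exact hzO z' hz' (hKO (h ▸ hwK))
  have hZinf : Z.Infinite := hinf
  set emb := hZinf.natEmbedding with hembdef
  apply no_big_disjoint_family hs (half_pos hε₀)
    (fun n => connectedComponentIn Kᶜ (p ((emb n : Z) : D)))
  · intro n
    exact isPreconnected_connectedComponentIn
  · intro n m hnm
    apply hdiff _ (emb n).2 _ (emb m).2
    intro h
    exact hnm (emb.injective (Subtype.ext h))
  · intro n
    set z : D := ((emb n : Z) : D) with hzdef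
    have hzZ : z ∈ Z := (emb n).2
    set An := connectedComponentIn Kᶜ (p z) with hAndef
    have hpzA : p z ∈ An := mem_connectedComponentIn (hzK z hzZ)
    have hAno : IsOpen An := hK.isOpen_compl.connectedComponentIn
    obtain ⟨c, hccl, hcA⟩ : ∃ c, c ∈ closure An ∧ c ∉ An := by
      by_contra hcl
      push_neg at hcl
      have : An = univ := IsClopen.eq_univ
        ⟨isClosed_of_closure_subset hcl, hAno⟩ ⟨p z, hpzA⟩
      obtain ⟨k₀, hk₀⟩ := hKne
      have hk₀' : k₀ ∈ An := by rw [this]; exact mem_univ k₀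
      exact (connectedComponentIn_subset Kᶜ (p z)) hk₀' hk₀
    have hcK : c ∈ K := by
      by_contra hcK
      have hΓ' : IsOpen (connectedComponentIn Kᶜ c) := hK.isOpen_compl.connectedComponentIn
      obtain ⟨t, ht⟩ := mem_closure_iff_nhds.mp hccl _
        (hΓ'.mem_nhds (mem_connectedComponentIn hcK))
      have h1 : connectedComponentIn Kᶜ c = connectedComponentIn Kᶜ t :=
        connectedComponentIn_eq ht.1
      have h2 : connectedComponentIn Kᶜ (p z) = connectedComponentIn Kᶜ t :=
        connectedComponentIn_eq ht.2
      apply hcA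
      rw [hAndef, h2, ← h1]
      exact mem_connectedComponentIn hcK
    have hdistc : ε₀ ≤ dist (p z) c := hlow _ (fun h => hzO z hzZ h) _ hcK
    obtain ⟨y, hyA, hyc⟩ := Metric.mem_closure_iff.mp hccl (ε₀/2) (half_pos hε₀)
    refine ⟨p z, hpzA, y, hyA, ?_⟩
    have htri := dist_triangle (p z) y c
    rw [dist_comm c y] at hyc
    linarith

lemma preimage_isFσ [SecondCountableTopology D] (hs : Hsep D) {p : D → D}
    (hB : ∀ u w v : D, Between u w v → Between (p u) (p w) (p v)) {O : Set D}
    (hO : IsOpen O) :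
    ∃ F : ℕ → Set D, (∀ n, IsClosed (F n)) ∧ p ⁻¹' O = ⋃ n, F n := by
  obtain ⟨𝒦, h𝒦c, h𝒦prop, h𝒦net⟩ := exists_network (D := D)
  set Fam : Set D × ℕ → Set D := fun Kn =>
    closure (p ⁻¹' Kn.1) ∩
      {x | ∀ z ∈ closure (p ⁻¹' Kn.1) \ p ⁻¹' O, 1/((Kn.2 : ℝ)+1) ≤ dist x z} with hFamdef
  set 𝒮 : Set (Set D) := insert ∅ (Fam '' ({K ∈ 𝒦 | K ⊆ O} ×ˢ (univ : Set ℕ))) with h𝒮def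
  have h𝒮c : 𝒮.Countable :=
    Set.Countable.insert _ (((h𝒦c.mono (sep_subset _ _)).prod countable_univ).image _)
  have h𝒮cl : ∀ S ∈ 𝒮, IsClosed S := by
    rintro S (rfl | ⟨⟨K, n⟩, -, rfl⟩)
    · exact isClosed_empty
    · apply IsClosed.inter isClosed_closure
      have : {x | ∀ z ∈ closure (p ⁻¹' K) \ p ⁻¹' O, 1/((n : ℝ)+1) ≤ dist x z} =
          ⋂ z ∈ closure (p ⁻¹' K) \ p ⁻¹' O, {x | 1/((n : ℝ)+1) ≤ dist x z} := by
        ext x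
        simp only [mem_setOf_eq, mem_iInter]
      rw [this]
      exact isClosed_biInter fun z _ => isClosed_le continuous_const
        (continuous_id.dist continuous_const)
  have hUnion : p ⁻¹' O = ⋃₀ 𝒮 := by
    apply Set.Subset.antisymm
    · intro x hx
      obtain ⟨K, hK𝒦, hpxK, hKO⟩ := h𝒦net O hO (p x) hx
      have hZfin : (closure (p ⁻¹' K) \ p ⁻¹' O).Finite :=
        lemmaZ hs hB (h𝒦prop K hK𝒦).1 (h𝒦prop K hK𝒦).2 hKO hO
      have hxZ : ∀ z ∈ closure (p ⁻¹' K) \ p ⁻¹' O, 0 < dist x z := by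
        intro z hz
        rw [dist_pos]
        intro h
        exact hz.2 (h ▸ hx)
      obtain ⟨n, hn⟩ := exists_unif hZfin hxZ
      refine ⟨Fam (K, n), Or.inr ⟨(K, n), ⟨⟨hK𝒦, hKO⟩, mem_univ n⟩, rfl⟩, ?_, ?_⟩
      · exact subset_closure hpxK
      · exact hn
    · intro x hx
      obtain ⟨S, hS, hxS⟩ := hx
      rcases (h𝒮def ▸ hS) with rfl | ⟨⟨K, n⟩, ⟨⟨hK𝒦, hKO⟩, -⟩, rfl⟩
      · exact absurd hxS (notMem_empty x)
      · by_contra hxO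
        have hxZ : x ∈ closure (p ⁻¹' K) \ p ⁻¹' O := ⟨hxS.1, hxO⟩
        have := hxS.2 x hxZ
        rw [dist_self] at this
        have hpos : (0:ℝ) < 1/((n : ℝ)+1) := by positivity
        linarith
  obtain ⟨f, hf⟩ := h𝒮c.exists_eq_range ⟨∅, Or.inl rfl⟩
  refine ⟨f, ?_, ?_⟩
  · intro n
    apply h𝒮cl
    rw [hf]
    exact mem_range_self n
  · rw [hUnion, hf, sUnion_range]

end Part2

section Homeo

variable {X : Type*} [TopologicalSpace X]

lemma sep_homeo (f : X ≃ₜ X) {w u v : X} (h : Separates w u v) :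
    Separates (f w) (f u) (f v) := by
  obtain ⟨U, V, hU, hV, hu, hv, hd, hc⟩ := h
  refine ⟨f.symm ⁻¹' U, f.symm ⁻¹' V, hU.preimage f.symm.continuous,
    hV.preimage f.symm.continuous, by simp [hu], by simp [hv], hd.preimage _, ?_⟩
  have h1 : ({f w}ᶜ : Set X) = f.symm ⁻¹' ({w}ᶜ : Set X) := by
    ext x
    simp only [mem_compl_iff, mem_singleton_iff, mem_preimage]
    constructor
    · intro hx h'
      exact hx (by rw [← h']; simp)
    · intro hx h'
      exact hx (by rw [h']; simp)
  rw [h1, hc, Set.preimage_union]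

lemma between_homeo (f : X ≃ₜ X) {u w v : X} (h : Between u w v) :
    Between (f u) (f w) (f v) := by
  rcases h with h | h | h
  · exact Or.inl (sep_homeo f h)
  · exact Or.inr (Or.inl (by rw [h]))
  · exact Or.inr (Or.inr (by rw [h]))

end Homeo

end Stmt12

/-- If `G` acts on a dendrite `D`, then every element `p` of the enveloping
semigroup (the pointwise closure of the translations `x ↦ g • x` in `D → D`) is interval
preserving and of Baire class 1. -/
theorem stmt_12 {G D : Type*} [Group G]
    [TopologicalSpace D] [CompactSpace D] [T2Space D] [ConnectedSpace D]
    [TopologicalSpace.MetrizableSpace D]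
    [MulAction G D] [ContinuousConstSMul G D]
    (hsep : ∀ u v : D, u ≠ v → ∃ w, Separates w u v)
    (p : D → D)
    (hp : p ∈ closure {q : D → D | ∃ g : G, q = fun x => g • x}) :
    (∀ u w v : D, Between u w v → Between (p u) (p w) (p v)) ∧
      ∀ O : Set D, IsOpen O → ∃ F : ℕ → Set D, (∀ n, IsClosed (F n)) ∧ p ⁻¹' O = ⋃ n, F n := by
  classical
  letI : MetricSpace D := TopologicalSpace.metrizableSpaceMetric D
  haveI : LocallyConnectedSpace D := Stmt12.locallyConnected hsep
  have hT : IsClosed {t : D × D × D | Between t.1 t.2.1 t.2.2} :=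
    Stmt12.between_isClosed hsep
  have hB : ∀ u w v : D, Between u w v → Between (p u) (p w) (p v) := by
    intro u w v h
    have hevc : Continuous (fun f : D → D => ((f u, f w, f v) : D × D × D)) :=
      Continuous.prodMk (continuous_apply u)
        (Continuous.prodMk (continuous_apply w) (continuous_apply v))
    have h1 : ((p u, p w, p v) : D × D × D) ∈
        closure ((fun f : D → D => ((f u, f w, f v) : D × D × D)) ''
          {q : D → D | ∃ g : G, q = fun x => g • x}) :=
      image_closure_subset_closure_image hevc (Set.mem_image_of_mem _ hp)
    have h2 : ((fun f : D → D => ((f u, f w, f v) : D × D × D)) ''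
        {q : D → D | ∃ g : G, q = fun x => g • x}) ⊆
        {t : D × D × D | Between t.1 t.2.1 t.2.2} := by
      rintro _ ⟨q, ⟨g, rfl⟩, rfl⟩
      exact Stmt12.between_homeo (Homeomorph.smul g) h
    exact (closure_minimal h2 hT) h1
  exact ⟨hB, fun O hO => Stmt12.preimage_isFσ hsep hB hO⟩
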